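/- Let G be a simple dimension group with order unit u and with exactly k extreme states τ₁, …, τ_k (k finite). Then either (G, G⁺) is isomorphic as an ordered group to (ℤ, ℕ), or the set {(τ₁(g), …, τ_k(g)) : g ∈ G} is dense in ℝᵏ. -/

import Mathlib

/-- The state space of an ordered abelian group `G` with order unit `u`. -/
def stateSet (G : Type*) [AddCommGroup G] [PartialOrder G] (u : G) :
    Set (G → ℝ) :=
  {f | (∀ a b : G, f (a + b) = f a + f b) ∧ (∀ a : G, 0 ≤ a → 0 ≤ f a) ∧ f u = 1}

section Stmt19Aux
variable {G : Type*} [AddCommGroup G] [PartialOrder G]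

private lemma sub0' (hadd : ∀ g h x : G, g ≤ h → g + x ≤ h + x)
    {a b : G} (h : a ≤ b) : 0 ≤ b - a := by
  have := hadd a b (-a) h
  simpa [← sub_eq_add_neg] using this

private lemma le_of_sub0' (hadd : ∀ g h x : G, g ≤ h → g + x ≤ h + x)
    {a b : G} (h : 0 ≤ b - a) : a ≤ b := by
  have := hadd 0 (b - a) a h
  simpa using this

private lemma le_mono' (hadd : ∀ g h x : G, g ≤ h → g + x ≤ h + x)
    {a b c d : G} (h : a ≤ b) (e : d - c = b - a) : c ≤ d :=
  le_of_sub0' hadd (e ▸ sub0' hadd h)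

private lemma add_le_add4' (hadd : ∀ g h x : G, g ≤ h → g + x ≤ h + x)
    {a b c d : G} (h1 : a ≤ b) (h2 : c ≤ d) : a + c ≤ b + d :=
  le_trans (le_mono' hadd h1 (c := a + c) (d := b + c) (by abel))
    (le_mono' hadd h2 (c := b + c) (d := b + d) (by abel))

private lemma add_nn' (hadd : ∀ g h x : G, g ≤ h → g + x ≤ h + x)
    {a b : G} (h1 : 0 ≤ a) (h2 : 0 ≤ b) : 0 ≤ a + b := by
  have := add_le_add4' hadd h1 h2; simpa using this

private lemma nsmul_nn' (hadd : ∀ g h x : G, g ≤ h → g + x ≤ h + x)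
    {p : G} (hp : 0 ≤ p) : ∀ n : ℕ, 0 ≤ n • p
  | 0 => by simp
  | (n+1) => by
      rw [succ_nsmul]
      exact add_nn' hadd (nsmul_nn' hadd hp n) hp

private lemma nsmul_mono' (hadd : ∀ g h x : G, g ≤ h → g + x ≤ h + x)
    {p : G} (hp : 0 ≤ p) {n m : ℕ} (h : n ≤ m) : n • p ≤ m • p := by
  have h0 : 0 ≤ (m - n) • p := nsmul_nn' hadd hp (m - n)
  have : n • p + 0 ≤ n • p + (m - n) • p := add_le_add4' hadd le_rfl h0
  rw [← add_nsmul] at this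
  rw [Nat.add_sub_cancel' h] at this
  simpa using this

/-! additive function helpers -/

private lemma f0' {f : G → ℝ} (hf : ∀ a b : G, f (a + b) = f a + f b) : f 0 = 0 := by
  have := hf 0 0; simp at this; linarith

private lemma fsub' {f : G → ℝ} (hf : ∀ a b : G, f (a + b) = f a + f b)
    (a b : G) : f (a - b) = f a - f b := by
  have h := hf (a - b) b
  rw [sub_add_cancel] at h
  linarith

private lemma fnsmul' {f : G → ℝ} (hf : ∀ a b : G, f (a + b) = f a + f b)
    (a : G) : ∀ n : ℕ, f (n • a) = n * f a
  | 0 => by simpa using f0' hf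
  | (n+1) => by
      rw [succ_nsmul, hf, fnsmul' hf a n]
      push_cast; ring

private lemma fzsmul' {f : G → ℝ} (hf : ∀ a b : G, f (a + b) = f a + f b)
    (a : G) : ∀ n : ℤ, f (n • a) = n * f a
  | Int.ofNat m => by
      have : (Int.ofNat m) • a = m • a := by simp
      rw [this, fnsmul' hf a m]; simp
  | Int.negSucc m => by
      have h1 : (Int.negSucc m) • a = 0 - ((m+1) • a) := by
        simp [negSucc_zsmul]
      rw [h1, fsub' hf, f0' hf, fnsmul' hf a (m+1)]
      push_cast; ring

private lemma fmono' (hadd : ∀ g h x : G, g ≤ h → g + x ≤ h + x)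
    {f : G → ℝ} (hf : ∀ a b : G, f (a + b) = f a + f b)
    (hfp : ∀ a : G, 0 ≤ a → 0 ≤ f a) {a b : G} (h : a ≤ b) : f a ≤ f b := by
  have h1 : 0 ≤ f (b - a) := hfp _ (sub0' hadd h)
  rw [fsub' hf] at h1; linarith

private lemma fsum' {f : G → ℝ} (hf : ∀ a b : G, f (a + b) = f a + f b)
    {ι : Type*} (s : Finset ι) (c : ι → G) :
    f (∑ j ∈ s, c j) = ∑ j ∈ s, f (c j) := by
  classical
  induction s using Finset.induction_on with
  | empty => simpa using f0' hf
  | insert j s' hj ih =>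
                    rw [Finset.sum_insert hj, Finset.sum_insert hj, hf, ih]

/-! order unit property from simplicity -/

private lemma exists_le_nsmul' (hadd : ∀ g h x : G, g ≤ h → g + x ≤ h + x)
    (hsimple : ∀ H : AddSubgroup G,
      (∀ g h x : G, g ∈ H → h ∈ H → g ≤ x → x ≤ h → x ∈ H) →
      (∀ x ∈ H, ∃ a ∈ H, ∃ b ∈ H, 0 ≤ a ∧ 0 ≤ b ∧ x = a - b) →
      H = ⊥ ∨ H = ⊤)
    {p : G} (hp : 0 ≤ p) (hp0 : p ≠ 0) (g : G) : ∃ n : ℕ, g ≤ n • p := by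
  set H : AddSubgroup G :=
    { carrier := {x | ∃ n : ℕ, -(n • p) ≤ x ∧ x ≤ n • p}
      zero_mem' := ⟨0, by simp⟩
      add_mem' := by
        rintro x y ⟨n, hn1, hn2⟩ ⟨m, hm1, hm2⟩
        refine ⟨n + m, ?_, ?_⟩
        · have := add_le_add4' hadd hn1 hm1
          rw [add_nsmul]
          exact le_mono' hadd this (by abel)
        · have := add_le_add4' hadd hn2 hm2
          rw [add_nsmul]
          exact le_mono' hadd this (by abel)
      neg_mem' := by
        rintro x ⟨n, hn1, hn2⟩
        exact ⟨n, le_mono' hadd hn2 (by abel), le_mono' hadd hn1 (by abel)⟩ } with hHdef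
  have hconv : ∀ g h x : G, g ∈ H → h ∈ H → g ≤ x → x ≤ h → x ∈ H := by
    rintro g h x ⟨n, hn1, _⟩ ⟨m, _, hm2⟩ hgx hxh
    refine ⟨n + m, ?_, ?_⟩
    · refine le_trans ?_ (le_trans hn1 hgx)
      have : n • p ≤ (n + m) • p := nsmul_mono' hadd hp (Nat.le_add_right n m)
      exact le_mono' hadd this (by abel)
    · refine le_trans (le_trans hxh hm2) ?_
      exact nsmul_mono' hadd hp (Nat.le_add_left m n)
  have hdec : ∀ x ∈ H, ∃ a ∈ H, ∃ b ∈ H, 0 ≤ a ∧ 0 ≤ b ∧ x = a - b := by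
    rintro x ⟨n, hn1, hn2⟩
    refine ⟨x + n • p, ⟨n + n, ?_, ?_⟩, n • p, ⟨n, ?_, le_rfl⟩, ?_, ?_, by abel⟩
    · have h0 : (0:G) ≤ x + n • p := le_mono' hadd hn1 (by abel)
      refine le_trans ?_ h0
      have : (0:G) ≤ (n+n) • p := nsmul_nn' hadd hp _
      exact le_mono' hadd this (by abel)
    · rw [add_nsmul]
      exact le_mono' hadd hn2 (by abel)
    · have h1 : (0:G) ≤ n • p := nsmul_nn' hadd hp _
      have h2 : -(n • p) ≤ 0 := le_mono' hadd h1 (by abel)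
      exact le_trans h2 h1
    · exact le_mono' hadd hn1 (by abel)
    · exact nsmul_nn' hadd hp _
  rcases hsimple H hconv hdec with hbot | htop
  · exfalso
    have hpH : p ∈ H := ⟨1, by
      constructor
      · have : -p ≤ 0 := le_mono' hadd hp (by abel)
        simpa using le_trans this hp
      · simp⟩
    rw [hbot] at hpH
    exact hp0 (by simpa using hpH)
  · have : g ∈ H := by rw [htop]; trivial
    rcases this with ⟨n, _, hn2⟩
    exact ⟨n, hn2⟩

/-! Riesz decomposition -/

private lemma riesz_decomp' (hadd : ∀ g h x : G, g ≤ h → g + x ≤ h + x)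
    (hRiesz : ∀ a₁ a₂ b₁ b₂ : G, a₁ ≤ b₁ → a₁ ≤ b₂ → a₂ ≤ b₁ → a₂ ≤ b₂ →
      ∃ z : G, a₁ ≤ z ∧ a₂ ≤ z ∧ z ≤ b₁ ∧ z ≤ b₂)
    {g a b : G} (hg : 0 ≤ g) (hgab : g ≤ a + b) (ha : 0 ≤ a) (hb : 0 ≤ b) :
    ∃ g₁ g₂ : G, g = g₁ + g₂ ∧ 0 ≤ g₁ ∧ g₁ ≤ a ∧ 0 ≤ g₂ ∧ g₂ ≤ b := by
  obtain ⟨z, hz0, hzgb, hzg, hza⟩ :=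
    hRiesz 0 (g - b) g a hg ha (le_mono' hadd hb (by abel)) (le_mono' hadd hgab (by abel))
  exact ⟨z, g - z, by abel, hz0, hza, sub0' hadd hzg, le_mono' hadd hzgb (by abel)⟩

end Stmt19Aux
section Stmt19Madd
variable {G : Type*} [AddCommGroup G] [PartialOrder G]

private lemma csInf_add_le' {s t : Set ℝ} {c : ℝ} (hs : s.Nonempty) (ht : t.Nonempty)
    (hbs : BddBelow s) (hbt : BddBelow t) (H : ∀ x ∈ s, ∀ y ∈ t, c ≤ x + y) :
    c ≤ sInf s + sInf t := by
  have h1 : ∀ x ∈ s, c - sInf t ≤ x := by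
    intro x hx
    have h2 : ∀ y ∈ t, c - x ≤ y := fun y hy => by linarith [H x hx y hy]
    have := le_csInf ht h2
    linarith
  have := le_csInf hs h1
  linarith

/-- approximate infimum functional of two positive additive maps -/
private noncomputable def Madd (f g : G → ℝ) (a : G) : ℝ :=
  sInf ((fun b => f b + g (a - b)) '' {b : G | 0 ≤ b ∧ b ≤ a})

private lemma Mset_nonempty {f g : G → ℝ} {a : G} (ha : 0 ≤ a) :
    ((fun b => f b + g (a - b)) '' {b : G | 0 ≤ b ∧ b ≤ a}).Nonempty :=
  ⟨f 0 + g (a - 0), ⟨0, ⟨le_rfl, ha⟩, rfl⟩⟩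

private lemma Mset_bdd (hadd : ∀ g h x : G, g ≤ h → g + x ≤ h + x)
    {f g : G → ℝ} (hfp : ∀ x : G, 0 ≤ x → 0 ≤ f x) (hgp : ∀ x : G, 0 ≤ x → 0 ≤ g x)
    {a : G} :
    ∀ v ∈ ((fun b => f b + g (a - b)) '' {b : G | 0 ≤ b ∧ b ≤ a}), (0:ℝ) ≤ v := by
  rintro v ⟨b, ⟨hb0, hba⟩, rfl⟩
  exact add_nonneg (hfp b hb0) (hgp _ (sub0' hadd hba))

private lemma Madd_nonneg (hadd : ∀ g h x : G, g ≤ h → g + x ≤ h + x)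
    {f g : G → ℝ} (hfp : ∀ x : G, 0 ≤ x → 0 ≤ f x) (hgp : ∀ x : G, 0 ≤ x → 0 ≤ g x)
    {a : G} (ha : 0 ≤ a) : 0 ≤ Madd f g a :=
  le_csInf (Mset_nonempty ha) (Mset_bdd hadd hfp hgp)

private lemma Madd_le (hadd : ∀ g h x : G, g ≤ h → g + x ≤ h + x)
    {f g : G → ℝ} (hfp : ∀ x : G, 0 ≤ x → 0 ≤ f x) (hgp : ∀ x : G, 0 ≤ x → 0 ≤ g x)
    {a b : G} (hb0 : 0 ≤ b) (hba : b ≤ a) : Madd f g a ≤ f b + g (a - b) :=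
  csInf_le ⟨0, Mset_bdd hadd hfp hgp⟩ ⟨b, ⟨hb0, hba⟩, rfl⟩

private lemma Madd_le_left (hadd : ∀ g h x : G, g ≤ h → g + x ≤ h + x)
    {f g : G → ℝ} (hfp : ∀ x : G, 0 ≤ x → 0 ≤ f x)
    (hg : ∀ a b : G, g (a + b) = g a + g b) (hgp : ∀ x : G, 0 ≤ x → 0 ≤ g x)
    {a : G} (ha : 0 ≤ a) : Madd f g a ≤ f a := by
  have h := Madd_le hadd hfp hgp ha (le_rfl (a := a))
  rw [sub_self, f0' hg] at h
  linarith

private lemma Madd_le_right (hadd : ∀ g h x : G, g ≤ h → g + x ≤ h + x)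
    {f g : G → ℝ} (hf : ∀ a b : G, f (a + b) = f a + f b)
    (hfp : ∀ x : G, 0 ≤ x → 0 ≤ f x) (hgp : ∀ x : G, 0 ≤ x → 0 ≤ g x)
    {a : G} (ha : 0 ≤ a) : Madd f g a ≤ g a := by
  have h := Madd_le hadd hfp hgp (le_rfl (a := (0:G))) ha
  rw [f0' hf, sub_zero] at h
  linarith

/-- additivity of `Madd` on the positive cone -/
private lemma Madd_add (hadd : ∀ g h x : G, g ≤ h → g + x ≤ h + x)
    (hRiesz : ∀ a₁ a₂ b₁ b₂ : G, a₁ ≤ b₁ → a₁ ≤ b₂ → a₂ ≤ b₁ → a₂ ≤ b₂ →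
      ∃ z : G, a₁ ≤ z ∧ a₂ ≤ z ∧ z ≤ b₁ ∧ z ≤ b₂)
    {f g : G → ℝ} (hf : ∀ a b : G, f (a + b) = f a + f b)
    (hg : ∀ a b : G, g (a + b) = g a + g b)
    (hfp : ∀ x : G, 0 ≤ x → 0 ≤ f x) (hgp : ∀ x : G, 0 ≤ x → 0 ≤ g x)
    {a₁ a₂ : G} (ha₁ : 0 ≤ a₁) (ha₂ : 0 ≤ a₂) :
    Madd f g (a₁ + a₂) = Madd f g a₁ + Madd f g a₂ := by
  have ha : 0 ≤ a₁ + a₂ := add_nn' hadd ha₁ ha₂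
  apply le_antisymm
  · -- Madd (a₁+a₂) ≤ Madd a₁ + Madd a₂
    apply csInf_add_le' (Mset_nonempty ha₁) (Mset_nonempty ha₂)
      ⟨0, Mset_bdd hadd hfp hgp⟩ ⟨0, Mset_bdd hadd hfp hgp⟩
    rintro x ⟨b₁, ⟨hb₁0, hb₁⟩, rfl⟩ y ⟨b₂, ⟨hb₂0, hb₂⟩, rfl⟩
    dsimp only
    have hmem : Madd f g (a₁ + a₂) ≤ f (b₁ + b₂) + g ((a₁ + a₂) - (b₁ + b₂)) :=
      Madd_le hadd hfp hgp (add_nn' hadd hb₁0 hb₂0) (add_le_add4' hadd hb₁ hb₂)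
    have e1 : f (b₁ + b₂) = f b₁ + f b₂ := hf _ _
    have e2 : g ((a₁ + a₂) - (b₁ + b₂)) = g (a₁ - b₁) + g (a₂ - b₂) := by
      rw [← hg]; congr 1; abel
    rw [e1, e2] at hmem
    linarith
  · -- Madd a₁ + Madd a₂ ≤ Madd (a₁+a₂)
    apply le_csInf (Mset_nonempty ha)
    rintro v ⟨b, ⟨hb0, hba⟩, rfl⟩
    dsimp only
    obtain ⟨c₁, c₂, hbc, hc₁0, hc₁, hc₂0, hc₂⟩ := riesz_decomp' hadd hRiesz hb0 hba ha₁ ha₂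
    have h1 : Madd f g a₁ ≤ f c₁ + g (a₁ - c₁) := Madd_le hadd hfp hgp hc₁0 hc₁
    have h2 : Madd f g a₂ ≤ f c₂ + g (a₂ - c₂) := Madd_le hadd hfp hgp hc₂0 hc₂
    have e1 : f b = f c₁ + f c₂ := by rw [hbc]; exact hf _ _
    have e2 : g ((a₁ + a₂) - b) = g (a₁ - c₁) + g (a₂ - c₂) := by
      rw [← hg]; congr 1; rw [hbc]; abel
    rw [e1, e2]
    linarith

private lemma Madd_zero {f g : G → ℝ} (hf : ∀ a b : G, f (a + b) = f a + f b)
    (hg : ∀ a b : G, g (a + b) = g a + g b) : Madd f g 0 = 0 := by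
  apply le_antisymm
  · have : Madd f g 0 ≤ f 0 + g (0 - 0) := csInf_le ?_ ⟨0, ⟨le_rfl, le_rfl⟩, rfl⟩
    · rw [f0' hf, sub_zero, f0' hg] at this; linarith
    · refine ⟨0, ?_⟩
      rintro v ⟨b, ⟨hb0, hb⟩, rfl⟩
      have : b = 0 := le_antisymm hb hb0
      subst this
      dsimp only
      rw [f0' hf, sub_zero, f0' hg]; simp
  · apply le_csInf (Mset_nonempty le_rfl)
    rintro v ⟨b, ⟨hb0, hb⟩, rfl⟩
    have : b = 0 := le_antisymm hb hb0
    subst this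
    dsimp only
    rw [f0' hf, sub_zero, f0' hg]; simp

private lemma Madd_nsmul (hadd : ∀ g h x : G, g ≤ h → g + x ≤ h + x)
    (hRiesz : ∀ a₁ a₂ b₁ b₂ : G, a₁ ≤ b₁ → a₁ ≤ b₂ → a₂ ≤ b₁ → a₂ ≤ b₂ →
      ∃ z : G, a₁ ≤ z ∧ a₂ ≤ z ∧ z ≤ b₁ ∧ z ≤ b₂)
    {f g : G → ℝ} (hf : ∀ a b : G, f (a + b) = f a + f b)
    (hg : ∀ a b : G, g (a + b) = g a + g b)
    (hfp : ∀ x : G, 0 ≤ x → 0 ≤ f x) (hgp : ∀ x : G, 0 ≤ x → 0 ≤ g x)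
    {a : G} (ha : 0 ≤ a) : ∀ n : ℕ, Madd f g (n • a) = n * Madd f g a
  | 0 => by simpa using Madd_zero hf hg
  | (n+1) => by
      rw [succ_nsmul, Madd_add hadd hRiesz hf hg hfp hgp (nsmul_nn' hadd ha n) ha,
        Madd_nsmul hadd hRiesz hf hg hfp hgp ha n]
      push_cast; ring

/-- `Madd` is monotone on the positive cone -/
private lemma Madd_mono (hadd : ∀ g h x : G, g ≤ h → g + x ≤ h + x)
    (hRiesz : ∀ a₁ a₂ b₁ b₂ : G, a₁ ≤ b₁ → a₁ ≤ b₂ → a₂ ≤ b₁ → a₂ ≤ b₂ →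
      ∃ z : G, a₁ ≤ z ∧ a₂ ≤ z ∧ z ≤ b₁ ∧ z ≤ b₂)
    {f g : G → ℝ} (hf : ∀ a b : G, f (a + b) = f a + f b)
    (hg : ∀ a b : G, g (a + b) = g a + g b)
    (hfp : ∀ x : G, 0 ≤ x → 0 ≤ f x) (hgp : ∀ x : G, 0 ≤ x → 0 ≤ g x)
    {a b : G} (ha : 0 ≤ a) (hab : a ≤ b) : Madd f g a ≤ Madd f g b := by
  have h1 : 0 ≤ b - a := sub0' hadd hab
  have h2 : Madd f g (a + (b - a)) = Madd f g a + Madd f g (b - a) :=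
    Madd_add hadd hRiesz hf hg hfp hgp ha h1
  rw [show a + (b - a) = b by abel] at h2
  have h3 : 0 ≤ Madd f g (b - a) := Madd_nonneg hadd hfp hgp h1
  linarith

/-- lower bound: any additive minorant of `f` and `g` minorizes `Madd f g`. -/
private lemma Madd_ge (hadd : ∀ g h x : G, g ≤ h → g + x ≤ h + x)
    {f g η : G → ℝ} (hη : ∀ a b : G, η (a + b) = η a + η b)
    (hηf : ∀ x : G, 0 ≤ x → η x ≤ f x) (hηg : ∀ x : G, 0 ≤ x → η x ≤ g x)
    {a : G} (ha : 0 ≤ a) : η a ≤ Madd f g a := by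
  apply le_csInf (Mset_nonempty ha)
  rintro v ⟨b, ⟨hb0, hba⟩, rfl⟩
  dsimp only
  have e : η a = η b + η (a - b) := by
    rw [← hη]; congr 1; abel
  have h1 := hηf b hb0
  have h2 := hηg (a - b) (sub0' hadd hba)
  linarith

/-- subadditivity in the first argument (needs interpolation). -/
private lemma Madd_subadd (hadd : ∀ g h x : G, g ≤ h → g + x ≤ h + x)
    (hRiesz : ∀ a₁ a₂ b₁ b₂ : G, a₁ ≤ b₁ → a₁ ≤ b₂ → a₂ ≤ b₁ → a₂ ≤ b₂ →
      ∃ z : G, a₁ ≤ z ∧ a₂ ≤ z ∧ z ≤ b₁ ∧ z ≤ b₂)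
    {f g h : G → ℝ} (hf : ∀ a b : G, f (a + b) = f a + f b)
    (hg : ∀ a b : G, g (a + b) = g a + g b)
    (hh : ∀ a b : G, h (a + b) = h a + h b)
    (hfp : ∀ x : G, 0 ≤ x → 0 ≤ f x) (hgp : ∀ x : G, 0 ≤ x → 0 ≤ g x)
    (hhp : ∀ x : G, 0 ≤ x → 0 ≤ h x)
    {a : G} (ha : 0 ≤ a) :
    Madd (fun x => f x + g x) h a ≤ Madd f h a + Madd g h a := by
  have hfgp : ∀ x : G, 0 ≤ x → 0 ≤ f x + g x := fun x hx =>
    add_nonneg (hfp x hx) (hgp x hx)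
  apply csInf_add_le' (Mset_nonempty ha) (Mset_nonempty ha)
    ⟨0, Mset_bdd hadd hfp hhp⟩ ⟨0, Mset_bdd hadd hgp hhp⟩
  rintro x ⟨b₁, ⟨hb₁0, hb₁⟩, rfl⟩ y ⟨b₂, ⟨hb₂0, hb₂⟩, rfl⟩
  dsimp only
  -- interpolate: max(0, b₁+b₂-a) ≤ z ≤ min(b₁,b₂)
  obtain ⟨z, hz0, hzba, hzb₁, hzb₂⟩ :=
    hRiesz 0 (b₁ + b₂ - a) b₁ b₂ hb₁0 hb₂0
      (le_mono' hadd hb₂ (by abel)) (le_mono' hadd hb₁ (by abel))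
  have hza : z ≤ a := le_trans hzb₁ hb₁
  have hmem : Madd (fun x => f x + g x) h a ≤ (f z + g z) + h (a - z) :=
    Madd_le hadd hfgp hhp hz0 hza
  have h1 : f z ≤ f b₁ := fmono' hadd hf hfp hzb₁
  have h2 : g z ≤ g b₂ := fmono' hadd hg hgp hzb₂
  have h3 : h (a - z) ≤ h (a - b₁) + h (a - b₂) := by
    have e : h (a - b₁) + h (a - b₂) = h (a - z) + h (z - (b₁ + b₂ - a)) := by
      rw [← hh, ← hh]; congr 1; abel
    have h4 : 0 ≤ h (z - (b₁ + b₂ - a)) := hhp _ (sub0' hadd hzba)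
    linarith
  linarith

end Stmt19Madd
section Stmt19Claim1
variable {G : Type*} [AddCommGroup G] [PartialOrder G]

/-- distinct extreme states have vanishing approximate infimum -/
private lemma claim1' (hadd : ∀ g h x : G, g ≤ h → g + x ≤ h + x)
    (hdir : ∀ g h : G, ∃ y : G, g ≤ y ∧ h ≤ y)
    (hRiesz : ∀ a₁ a₂ b₁ b₂ : G, a₁ ≤ b₁ → a₁ ≤ b₂ → a₂ ≤ b₁ → a₂ ≤ b₂ →
      ∃ z : G, a₁ ≤ z ∧ a₂ ≤ z ∧ z ≤ b₁ ∧ z ≤ b₂)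
    {u : G} (hu0 : 0 ≤ u) (huu : ∀ g : G, ∃ n : ℕ, g ≤ n • u)
    {f g : G → ℝ}
    (hfe : f ∈ Set.extremePoints ℝ (stateSet G u))
    (hge : g ∈ Set.extremePoints ℝ (stateSet G u))
    (hfg : f ≠ g) :
    ∀ a : G, 0 ≤ a → Madd f g a = 0 := by
  obtain ⟨⟨hf, hfp, hfu⟩, hfext⟩ := hfe
  obtain ⟨⟨hg, hgp, hgu⟩, hgext⟩ := hge
  set M : G → ℝ := Madd f g with hM
  -- the value at u
  set t : ℝ := M u with ht
  have ht0 : 0 ≤ t := Madd_nonneg hadd hfp hgp hu0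
  have ht1 : t ≤ 1 := by
    have := Madd_le_left hadd hfp hg hgp hu0
    rw [hfu] at this; exact this
  -- key subcase: t = 0 gives the conclusion
  rcases eq_or_lt_of_le ht0 with ht0' | htpos
  · intro a ha
    obtain ⟨n, hn⟩ := huu a
    have h1 : M a ≤ M (n • u) :=
      Madd_mono hadd hRiesz hf hg hfp hgp ha hn
    have h2 : M (n • u) = n * t := Madd_nsmul hadd hRiesz hf hg hfp hgp hu0 n
    have h3 : 0 ≤ M a := Madd_nonneg hadd hfp hgp ha
    rw [h2, ← ht0'] at h1
    simp at h1
    linarith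
  -- otherwise we construct an additive extension h of M and contradict extremality
  exfalso
  -- upper bound choice
  have hY : ∀ x : G, ∃ y : G, x ≤ y ∧ 0 ≤ y := fun x => by
    obtain ⟨y, h1, h2⟩ := hdir x 0; exact ⟨y, h1, h2⟩
  choose Y hY1 hY2 using hY
  set h : G → ℝ := fun x => M (Y x) - M (Y x - x) with hh
  -- invariance of the definition
  have hinv : ∀ x y : G, x ≤ y → 0 ≤ y → h x = M y - M (y - x) := by
    intro x y hxy hy0
    have key : ∀ y₁ y₂ : G, x ≤ y₁ → 0 ≤ y₁ → x ≤ y₂ → 0 ≤ y₂ →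
        M y₁ - M (y₁ - x) = M y₂ - M (y₂ - x) := by
      have half : ∀ y₁ y₂ : G, x ≤ y₁ → 0 ≤ y₁ → y₁ ≤ y₂ →
          M y₁ - M (y₁ - x) = M y₂ - M (y₂ - x) := by
        intro y₁ y₂ hxy₁ hy₁0 h12
        have hd : 0 ≤ y₂ - y₁ := sub0' hadd h12
        have e1 : M y₂ = M y₁ + M (y₂ - y₁) := by
          have := Madd_add hadd hRiesz hf hg hfp hgp hy₁0 hd
          rw [show y₁ + (y₂ - y₁) = y₂ by abel] at this
          exact this
        have e2 : M (y₂ - x) = M (y₁ - x) + M (y₂ - y₁) := by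
          have h₁x : 0 ≤ y₁ - x := sub0' hadd hxy₁
          have := Madd_add hadd hRiesz hf hg hfp hgp h₁x hd
          rw [show y₁ - x + (y₂ - y₁) = y₂ - x by abel] at this
          exact this
        rw [e1, e2]; ring
      intro y₁ y₂ hxy₁ hy₁0 hxy₂ hy₂0
      obtain ⟨w, hw1, hw2⟩ := hdir y₁ y₂
      rw [half y₁ w hxy₁ hy₁0 hw1, half y₂ w hxy₂ hy₂0 hw2]
    exact key (Y x) y (hY1 x) (hY2 x) hxy hy0
  -- h is additive
  have hhadd : ∀ a b : G, h (a + b) = h a + h b := by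
    intro a b
    have h1 : a + b ≤ Y a + Y b := add_le_add4' hadd (hY1 a) (hY1 b)
    have h2 : 0 ≤ Y a + Y b := add_nn' hadd (hY2 a) (hY2 b)
    rw [hinv (a+b) (Y a + Y b) h1 h2]
    have e1 : M (Y a + Y b) = M (Y a) + M (Y b) :=
      Madd_add hadd hRiesz hf hg hfp hgp (hY2 a) (hY2 b)
    have e2 : M (Y a + Y b - (a + b)) = M (Y a - a) + M (Y b - b) := by
      have := Madd_add hadd hRiesz hf hg hfp hgp
        (sub0' hadd (hY1 a)) (sub0' hadd (hY1 b))
      rw [show Y a - a + (Y b - b) = Y a + Y b - (a + b) by abel] at this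
      exact this
    rw [e1, e2]
    simp only [hh]
    ring
  -- h agrees with M on the positive cone
  have hMpos : ∀ a : G, 0 ≤ a → h a = M a := by
    intro a ha
    rw [hinv a a le_rfl ha, sub_self]
    have h0 : M 0 = 0 := Madd_zero hf hg
    rw [h0]; ring
  have hhu : h u = t := by rw [hMpos u hu0]
  -- h ≤ f and h ≤ g on the positive cone
  have hhf : ∀ a : G, 0 ≤ a → h a ≤ f a := fun a ha => by
    rw [hMpos a ha]; exact Madd_le_left hadd hfp hg hgp ha
  have hhg : ∀ a : G, 0 ≤ a → h a ≤ g a := fun a ha => by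
    rw [hMpos a ha]; exact Madd_le_right hadd hf hfp hgp ha
  have hhnn : ∀ a : G, 0 ≤ a → 0 ≤ h a := fun a ha => by
    rw [hMpos a ha]; exact Madd_nonneg hadd hfp hgp ha
  -- a positive additive functional vanishing at u vanishes
  have hvanish : ∀ D : G → ℝ, (∀ a b : G, D (a + b) = D a + D b) →
      (∀ a : G, 0 ≤ a → 0 ≤ D a) → D u = 0 → ∀ x : G, D x = 0 := by
    intro D hD hDp hDu x
    have hpos0 : ∀ a : G, 0 ≤ a → D a = 0 := by
      intro a ha
      obtain ⟨n, hn⟩ := huu a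
      have h1 : D a ≤ D (n • u) := fmono' hadd hD hDp hn
      rw [fnsmul' hD u n, hDu] at h1
      have := hDp a ha
      simp at h1
      linarith
    have e : D x = D (Y x) - D (Y x - x) := by
      have := hD (Y x - x) x
      rw [show Y x - x + x = Y x by abel] at this
      linarith
    rw [e, hpos0 _ (hY2 x), hpos0 _ (sub0' hadd (hY1 x))]
    ring
  rcases eq_or_lt_of_le ht1 with ht1' | htlt
  · -- t = 1 : then f = h = g, contradiction
    have hf' : ∀ x, f x - h x = 0 := by
      apply hvanish (fun x => f x - h x)
        (fun a b => by rw [hf, hhadd]; ring)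
        (fun a ha => by have := hhf a ha; linarith)
      rw [hfu, hhu, ← ht1']; ring
    have hg' : ∀ x, g x - h x = 0 := by
      apply hvanish (fun x => g x - h x)
        (fun a b => by rw [hg, hhadd]; ring)
        (fun a ha => by have := hhg a ha; linarith)
      rw [hgu, hhu, ← ht1']; ring
    apply hfg
    funext x
    have e1 := hf' x; have e2 := hg' x
    linarith
  · -- 0 < t < 1 : h/t is a state, and f, g are both proper combinations with it
    have htne : t ≠ 0 := ne_of_gt htpos
    have h1tne : (1:ℝ) - t ≠ 0 := by intro hc; rw [sub_eq_zero] at hc; exact (ne_of_lt htlt) hc.symm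
    have hf₁S : (fun x => h x / t) ∈ stateSet G u := by
      refine ⟨fun a b => by dsimp only; rw [hhadd]; ring, fun a ha => ?_, ?_⟩
      · dsimp only
        exact div_nonneg (hhnn a ha) (le_of_lt htpos)
      · show h u / t = 1
        rw [hhu]; field_simp
    have hstate2 : ∀ F : G → ℝ, (∀ a b : G, F (a + b) = F a + F b) →
        (∀ a : G, 0 ≤ a → 0 ≤ F a) → F u = 1 →
        (∀ a : G, 0 ≤ a → h a ≤ F a) →
        (F ∈ Set.extremePoints ℝ (stateSet G u)) → (fun x => h x / t) = F := by
      intro F hF hFp hFu hhF hFext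
      have hF₂S : (fun x => (F x - h x) / (1 - t)) ∈ stateSet G u := by
        refine ⟨fun a b => by dsimp only; rw [hF, hhadd]; ring, fun a ha => ?_, ?_⟩
        · dsimp only
          have := hhF a ha
          have h1t : (0:ℝ) < 1 - t := by linarith
          apply div_nonneg _ (le_of_lt h1t)
          linarith
        · show (F u - h u) / (1 - t) = 1
          rw [hFu, hhu]; field_simp
      have hseg : F ∈ openSegment ℝ (fun x => h x / t) (fun x => (F x - h x) / (1 - t)) := by
        refine ⟨t, 1 - t, htpos, by linarith, by ring, ?_⟩
        funext x
        simp only [Pi.add_apply, Pi.smul_apply, smul_eq_mul]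
        field_simp
        ring
      have h1 := hFext.2 hf₁S hF₂S hseg
      exact h1
    have e1 := hstate2 f hf hfp hfu hhf ⟨⟨hf, hfp, hfu⟩, hfext⟩
    have e2 := hstate2 g hg hgp hgu hhg ⟨⟨hg, hgp, hgu⟩, hgext⟩
    exact hfg (e1 ▸ e2)

end Stmt19Claim1
section Stmt19Skew
variable {G : Type*} [AddCommGroup G] [PartialOrder G]

private lemma skew' (hadd : ∀ g h x : G, g ≤ h → g + x ≤ h + x)
    (hdir : ∀ g h : G, ∃ y : G, g ≤ y ∧ h ≤ y)
    (hRiesz : ∀ a₁ a₂ b₁ b₂ : G, a₁ ≤ b₁ → a₁ ≤ b₂ → a₂ ≤ b₁ → a₂ ≤ b₂ →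
      ∃ z : G, a₁ ≤ z ∧ a₂ ≤ z ∧ z ≤ b₁ ∧ z ≤ b₂)
    (hsimple : ∀ H : AddSubgroup G,
      (∀ g h x : G, g ∈ H → h ∈ H → g ≤ x → x ≤ h → x ∈ H) →
      (∀ x ∈ H, ∃ a ∈ H, ∃ b ∈ H, 0 ≤ a ∧ 0 ≤ b ∧ x = a - b) →
      H = ⊥ ∨ H = ⊤)
    {u : G} (hu0 : 0 ≤ u) (huu : ∀ g : G, ∃ n : ℕ, g ≤ n • u)
    {k : ℕ} {τ : Fin k → (G → ℝ)} (hτinj : Function.Injective τ)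
    (hτext : ∀ i, τ i ∈ Set.extremePoints ℝ (stateSet G u))
    (small : ∀ δ : ℝ, 0 < δ → ∃ s : G, 0 ≤ s ∧ s ≠ 0 ∧ ∀ j, τ j s < δ)
    (i : Fin k) :
    ∀ ε : ℝ, 0 < ε → ∀ δ : ℝ, 0 < δ → ∃ a : G, 0 ≤ a ∧ a ≠ 0 ∧
      (∑ j ∈ Finset.univ.erase i, τ j a) ≤ ε * τ i a ∧ τ i a ≤ δ := by
  classical
  have hτadd : ∀ j, ∀ a b : G, τ j (a + b) = τ j a + τ j b := fun j => (hτext j).1.1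
  have hτpos : ∀ j, ∀ a : G, 0 ≤ a → 0 ≤ τ j a := fun j => (hτext j).1.2.1
  have hτu : ∀ j, τ j u = 1 := fun j => (hτext j).1.2.2
  by_contra hcon
  push_neg at hcon
  obtain ⟨ε₀, hε₀, δ₀, hδ₀, hbig⟩ := hcon
  -- the functional ∑_{j≠i} τ_j - ε₀ τ_i is nonnegative on the positive cone
  set σL : G → ℝ := fun x => ∑ j ∈ Finset.univ.erase i, τ j x with hσL
  have hσadd : ∀ a b : G, σL (a + b) = σL a + σL b := by
    intro a b
    simp only [hσL]
    rw [← Finset.sum_add_distrib]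
    exact Finset.sum_congr rfl fun j _ => hτadd j a b
  have hσpos : ∀ a : G, 0 ≤ a → 0 ≤ σL a :=
    fun a ha => Finset.sum_nonneg fun j _ => hτpos j a ha
  have hρpos : ∀ b : G, 0 ≤ b → ε₀ * τ i b ≤ σL b := by
    obtain ⟨s, hs0, hsne, hsτ⟩ := small δ₀ hδ₀
    have key : ∀ N : ℕ, ∀ b : G, 0 ≤ b → b ≤ N • s → ε₀ * τ i b ≤ σL b := by
      intro N
      induction N with
      | zero =>
          intro b hb0 hble
          rw [zero_nsmul] at hble
          have : b = 0 := le_antisymm hble hb0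
          subst this
          rw [f0' (hτadd i), f0' hσadd]
          simp
      | succ N ih =>
          intro b hb0 hble
          rw [succ_nsmul] at hble
          obtain ⟨b₁, b₂, hb12, hb₁0, hb₁, hb₂0, hb₂⟩ :=
            riesz_decomp' hadd hRiesz hb0 hble (nsmul_nn' hadd hs0 N) hs0
          have h1 : ε₀ * τ i b₁ ≤ σL b₁ := ih b₁ hb₁0 hb₁
          have h2 : ε₀ * τ i b₂ ≤ σL b₂ := by
            rcases eq_or_ne b₂ 0 with h | h
            · subst h; rw [f0' (hτadd i), f0' hσadd]; simp
            · have hsmall2 : τ i b₂ ≤ δ₀ :=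
                le_trans (fmono' hadd (hτadd i) (hτpos i) hb₂) (le_of_lt (hsτ i))
              have := hbig b₂ hb₂0 h
              by_contra hc
              push_neg at hc
              exact absurd hsmall2 (not_le.mpr (this (le_of_lt hc)))
          rw [hb12, hτadd i, hσadd]
          have := mul_add ε₀ (τ i b₁) (τ i b₂)
          linarith
    intro b hb0
    obtain ⟨N, hN⟩ := exists_le_nsmul' hadd hsimple hs0 hsne b
    exact key N b hb0 hN
  -- contradiction via the approximate infimum
  set c : ℝ := min ε₀ 1 with hc
  have hc0 : 0 < c := lt_min hε₀ one_pos
  have hc1 : c ≤ 1 := min_le_right _ _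
  have hcε : c ≤ ε₀ := min_le_left _ _
  -- lower bound c ≤ Madd σL (τ i) u
  have hlow : c ≤ Madd σL (τ i) u := by
    have := Madd_ge hadd (η := fun x => c * τ i x)
      (fun a b => by rw [hτadd i]; ring)
      (fun x hx => by
        have h1 := hρpos x hx
        have h2 := hτpos i x hx
        nlinarith)
      (fun x hx => by
        have h2 := hτpos i x hx
        nlinarith)
      hu0
    rw [hτu i] at this
    simpa only [mul_one] using this
  -- upper bound Madd σL (τ i) u ≤ 0
  have hup : ∀ s : Finset (Fin k), i ∉ s →
      Madd (fun x => ∑ j ∈ s, τ j x) (τ i) u ≤ 0 := by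
    intro s
    induction s using Finset.induction_on with
    | empty =>
        intro _
        have h := Madd_le_left hadd (f := fun _ : G => (0:ℝ)) (g := τ i)
          (fun x _ => le_rfl) (hτadd i) (hτpos i) hu0
        simp only [Finset.sum_empty]
        exact h
    | insert j s' hj ih =>
        intro hins
        have hjne : j ≠ i := fun h => hins (h ▸ Finset.mem_insert_self j s')
        have hs' : i ∉ s' := fun h => hins (Finset.mem_insert_of_mem h)
        have hsadd : ∀ a b : G, (∑ j' ∈ s', τ j' (a + b)) = (∑ j' ∈ s', τ j' a) + ∑ j' ∈ s', τ j' b := by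
          intro a b
          rw [← Finset.sum_add_distrib]
          exact Finset.sum_congr rfl fun j' _ => hτadd j' a b
        have hspos : ∀ a : G, 0 ≤ a → 0 ≤ ∑ j' ∈ s', τ j' a :=
          fun a ha => Finset.sum_nonneg fun j' _ => hτpos j' a ha
        have hsub := Madd_subadd hadd hRiesz (f := τ j) (g := fun x => ∑ j' ∈ s', τ j' x)
          (h := τ i) (hτadd j) hsadd (hτadd i) (hτpos j) hspos (hτpos i) hu0
        have h1 : Madd (τ j) (τ i) u = 0 :=
          claim1' hadd hdir hRiesz hu0 huu (hτext j) (hτext i)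
            (fun h => hjne (hτinj h)) u hu0
        have h2 := ih hs'
        simp only [Finset.sum_insert hj]
        calc Madd (fun x => τ j x + ∑ j' ∈ s', τ j' x) (τ i) u
            ≤ Madd (τ j) (τ i) u + Madd (fun x => ∑ j' ∈ s', τ j' x) (τ i) u := hsub
          _ ≤ 0 := by rw [h1]; linarith
  have := hup (Finset.univ.erase i) (Finset.notMem_erase i _)
  have hfinal : c ≤ 0 := le_trans hlow this
  linarith

end Stmt19Skew

/-- A simple dimension group with order unit and exactly `k` (finitely many)
extreme states `τ₁, …, τ_k` is either isomorphic as an ordered group to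
`(ℤ, ℕ)`, or the image `{(τ₁(g), …, τ_k(g)) : g ∈ G}` is dense in `ℝᵏ`. -/
theorem stmt19 {G : Type*} [AddCommGroup G] [PartialOrder G]
    (hadd : ∀ g h x : G, g ≤ h → g + x ≤ h + x)
    (hdir : ∀ g h : G, ∃ y : G, g ≤ y ∧ h ≤ y)
    (hunperf : ∀ (n : ℕ) (g : G), 0 < n → 0 ≤ n • g → 0 ≤ g)
    (hRiesz : ∀ a₁ a₂ b₁ b₂ : G, a₁ ≤ b₁ → a₁ ≤ b₂ → a₂ ≤ b₁ → a₂ ≤ b₂ →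
      ∃ z : G, a₁ ≤ z ∧ a₂ ≤ z ∧ z ≤ b₁ ∧ z ≤ b₂)
    (hsimple : ∀ H : AddSubgroup G,
      (∀ g h x : G, g ∈ H → h ∈ H → g ≤ x → x ≤ h → x ∈ H) →
      (∀ x ∈ H, ∃ a ∈ H, ∃ b ∈ H, 0 ≤ a ∧ 0 ≤ b ∧ x = a - b) →
      H = ⊥ ∨ H = ⊤)
    (u : G) (hu : 0 ≤ u ∧ ∀ g : G, ∃ n : ℕ, -(n • u) ≤ g ∧ g ≤ n • u)
    (k : ℕ) (τ : Fin k → (G → ℝ)) (hτinj : Function.Injective τ)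
    (hτext : ∀ i, τ i ∈ Set.extremePoints ℝ (stateSet G u))
    (hall : ∀ f ∈ Set.extremePoints ℝ (stateSet G u), ∃ i, f = τ i) :
    (∃ e : G ≃+ ℤ, ∀ g : G, 0 ≤ g ↔ 0 ≤ e g) ∨
    Dense (Set.range fun g : G => fun i : Fin k => τ i g) := by
  classical
  -- trivial case `k = 0`
  rcases Nat.eq_zero_or_pos k with hk | hkpos
  · right
    subst hk
    intro x
    have hx : x = (fun i : Fin 0 => τ i 0) := funext fun i => i.elim0
    rw [hx]
    exact subset_closure ⟨0, rfl⟩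
  set i₀ : Fin k := ⟨0, hkpos⟩ with hi₀
  -- basic facts about the states
  have hτadd : ∀ j, ∀ a b : G, τ j (a + b) = τ j a + τ j b := fun j => (hτext j).1.1
  have hτpos : ∀ j, ∀ a : G, 0 ≤ a → 0 ≤ τ j a := fun j => (hτext j).1.2.1
  have hτu : ∀ j, τ j u = 1 := fun j => (hτext j).1.2.2
  have hu0 : 0 ≤ u := hu.1
  have huu : ∀ g : G, ∃ n : ℕ, g ≤ n • u := fun g => by
    obtain ⟨n, _, h2⟩ := hu.2 g; exact ⟨n, h2⟩
  have hune : u ≠ 0 := by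
    intro hc
    have h1 := hτu i₀
    rw [hc, f0' (hτadd i₀)] at h1
    norm_num at h1
  -- faithfulness of the states (simplicity)
  have hfaith : ∀ p : G, 0 ≤ p → p ≠ 0 → ∀ j, 0 < τ j p := by
    intro p hp hpne j
    obtain ⟨n, hn⟩ := exists_le_nsmul' hadd hsimple hp hpne u
    have h1 : τ j u ≤ τ j (n • p) := fmono' hadd (hτadd j) (hτpos j) hn
    rw [hτu j, fnsmul' (hτadd j)] at h1
    by_contra hc
    push_neg at hc
    have hn0 : (0:ℝ) ≤ n := Nat.cast_nonneg n
    nlinarith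
  by_cases hsp : ∀ δ : ℝ, 0 < δ → ∃ s : G, 0 ≤ s ∧ s ≠ 0 ∧ ∀ j, τ j s < δ
  · -- density case
    right
    rw [Metric.dense_iff]
    intro x r hr
    obtain ⟨N, hN⟩ := exists_nat_gt (∑ j, |x j|)
    set tt : Fin k → ℝ := fun j => x j + N with htt
    have httpos : ∀ j, 0 < tt j := by
      intro j
      have h1 : |x j| ≤ ∑ j', |x j'| :=
        Finset.single_le_sum (f := fun j' => |x j'|) (fun _ _ => abs_nonneg _)
          (Finset.mem_univ j)
      have h2 : -x j ≤ |x j| := neg_le_abs _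
      simp only [htt]
      linarith
    set T : ℝ := ∑ j, tt j with hT
    have hT0 : 0 < T := Finset.sum_pos (fun j _ => httpos j) ⟨i₀, Finset.mem_univ i₀⟩
    set ε' : ℝ := r / (2 * (T + 1)) with hε'
    have hε'0 : 0 < ε' := by positivity
    set δ' : ℝ := r / 2 with hδ'
    have hδ'0 : 0 < δ' := by positivity
    have hskew := fun i => skew' hadd hdir hRiesz hsimple hu0 huu hτinj hτext hsp i ε' hε'0 δ' hδ'0
    choose a ha0 hane hasum hasmall using hskew
    have haτ : ∀ i, 0 < τ i (a i) := fun i => hfaith (a i) (ha0 i) (hane i) i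
    set m : Fin k → ℕ := fun i => ⌊tt i / τ i (a i)⌋₊ with hm
    have hm1 : ∀ i, (m i : ℝ) * τ i (a i) ≤ tt i := by
      intro i
      have h1 : (m i : ℝ) ≤ tt i / τ i (a i) :=
        Nat.floor_le (div_nonneg (le_of_lt (httpos i)) (le_of_lt (haτ i)))
      rwa [le_div_iff₀ (haτ i)] at h1
    have hm2 : ∀ i, tt i < ((m i : ℝ) + 1) * τ i (a i) := by
      intro i
      have h1 : tt i / τ i (a i) < (m i : ℝ) + 1 := Nat.lt_floor_add_one _
      rwa [div_lt_iff₀ (haτ i)] at h1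
    set g : G := (∑ i, m i • a i) - N • u with hg
    refine ⟨fun j => τ j g, ?_, ⟨g, rfl⟩⟩
    rw [Metric.mem_ball, dist_pi_lt_iff hr]
    intro j
    -- compute τ j g
    have e1 : τ j g = (∑ i, (m i : ℝ) * τ j (a i)) - (N : ℝ) := by
      rw [hg, fsub' (hτadd j), fsum' (hτadd j), fnsmul' (hτadd j), hτu j, mul_one]
      congr 1
      exact Finset.sum_congr rfl fun i _ => fnsmul' (hτadd j) (a i) (m i)
    have e2 : (∑ i ∈ Finset.univ.erase j, (m i : ℝ) * τ j (a i)) + (m j : ℝ) * τ j (a j)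
        = ∑ i, (m i : ℝ) * τ j (a i) :=
      Finset.sum_erase_add _ _ (Finset.mem_univ j)
    -- bound on the cross terms
    have hcross : (∑ i ∈ Finset.univ.erase j, (m i : ℝ) * τ j (a i)) ≤ ε' * T := by
      have hterm : ∀ i ∈ Finset.univ.erase j, (m i : ℝ) * τ j (a i) ≤ ε' * tt i := by
        intro i hi
        have hij : i ≠ j := (Finset.mem_erase.mp hi).1
        have h1 : τ j (a i) ≤ ∑ j' ∈ Finset.univ.erase i, τ j' (a i) :=
          Finset.single_le_sum (fun j' _ => hτpos j' (a i) (ha0 i))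
            (Finset.mem_erase.mpr ⟨hij.symm, Finset.mem_univ j⟩)
        have h2 : τ j (a i) ≤ ε' * τ i (a i) := le_trans h1 (hasum i)
        have h3 : (m i : ℝ) * τ j (a i) ≤ (m i : ℝ) * (ε' * τ i (a i)) :=
          mul_le_mul_of_nonneg_left h2 (Nat.cast_nonneg _)
        have h4 : (m i : ℝ) * (ε' * τ i (a i)) = ε' * ((m i : ℝ) * τ i (a i)) := by ring
        have h5 : ε' * ((m i : ℝ) * τ i (a i)) ≤ ε' * tt i :=
          mul_le_mul_of_nonneg_left (hm1 i) (le_of_lt hε'0)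
        linarith
      have h6 : (∑ i ∈ Finset.univ.erase j, (m i : ℝ) * τ j (a i))
          ≤ ∑ i ∈ Finset.univ.erase j, ε' * tt i := Finset.sum_le_sum hterm
      have h7 : (∑ i ∈ Finset.univ.erase j, ε' * tt i) ≤ ∑ i, ε' * tt i := by
        apply Finset.sum_le_sum_of_subset_of_nonneg (Finset.erase_subset _ _)
        intro i _ _
        exact mul_nonneg (le_of_lt hε'0) (le_of_lt (httpos i))
      have h8 : (∑ i, ε' * tt i) = ε' * T := by rw [hT, Finset.mul_sum]
      linarith
    have hcross0 : 0 ≤ ∑ i ∈ Finset.univ.erase j, (m i : ℝ) * τ j (a i) :=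
      Finset.sum_nonneg fun i _ =>
        mul_nonneg (Nat.cast_nonneg _) (hτpos j (a i) (ha0 i))
    -- diagonal term bounds
    have hdiag1 : (m j : ℝ) * τ j (a j) ≤ tt j := hm1 j
    have hdiag2 : tt j - δ' ≤ (m j : ℝ) * τ j (a j) := by
      have := hm2 j
      have h1 : τ j (a j) ≤ δ' := hasmall j
      nlinarith
    -- the total estimate
    have hεT : ε' * T < r / 2 := by
      have h1 : ε' * T < ε' * (T + 1) := by
        apply mul_lt_mul_of_pos_left _ hε'0
        linarith
      have h2 : ε' * (T + 1) = r / 2 := by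
        rw [hε']
        field_simp
      linarith
    rw [Real.dist_eq, abs_lt]
    constructor
    · -- -r < τ j g - x j
      have : τ j g - x j = ((∑ i ∈ Finset.univ.erase j, (m i : ℝ) * τ j (a i))
          + (m j : ℝ) * τ j (a j)) - tt j := by
        rw [e2, e1, htt]; ring
      rw [this]
      have : -δ' ≤ ((∑ i ∈ Finset.univ.erase j, (m i : ℝ) * τ j (a i))
          + (m j : ℝ) * τ j (a j)) - tt j := by linarith
      rw [hδ'] at this
      linarith
    · -- τ j g - x j < r
      have heq : τ j g - x j = ((∑ i ∈ Finset.univ.erase j, (m i : ℝ) * τ j (a i))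
          + (m j : ℝ) * τ j (a j)) - tt j := by
        rw [e2, e1, htt]; ring
      rw [heq]
      linarith
  · -- the ℤ case
    left
    push_neg at hsp
    obtain ⟨δ₀, hδ₀, hbig⟩ := hsp
    set F : G → ℝ := fun g => ∑ j, τ j g with hF
    have hFadd : ∀ a b : G, F (a + b) = F a + F b := by
      intro a b
      simp only [hF]
      rw [← Finset.sum_add_distrib]
      exact Finset.sum_congr rfl fun j _ => hτadd j a b
    have hFbig : ∀ g : G, 0 ≤ g → g ≠ 0 → δ₀ ≤ F g := by
      intro g hg0 hgne
      obtain ⟨j, hj⟩ := hbig g hg0 hgne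
      have h1 : τ j g ≤ F g :=
        Finset.single_le_sum (fun j' _ => hτpos j' g hg0) (Finset.mem_univ j)
      linarith
    set SS : Set ℝ := F '' {g : G | 0 ≤ g ∧ g ≠ 0} with hSS
    have hSSne : SS.Nonempty := ⟨F u, ⟨u, ⟨hu0, hune⟩, rfl⟩⟩
    have hSSlb : ∀ v ∈ SS, δ₀ ≤ v := by
      rintro v ⟨g, ⟨hg0, hgne⟩, rfl⟩
      exact hFbig g hg0 hgne
    have hSSbdd : BddBelow SS := ⟨δ₀, hSSlb⟩
    set μ : ℝ := sInf SS with hμdef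
    have hμ : δ₀ ≤ μ := le_csInf hSSne hSSlb
    have hμμ : μ < μ + μ := by linarith
    obtain ⟨v, hvSS, hvlt⟩ := (csInf_lt_iff hSSbdd hSSne).mp hμμ
    obtain ⟨p, ⟨hp0, hpne⟩, rfl⟩ := hvSS
    -- p is an atom
    have hatom : ∀ q : G, 0 ≤ q → q ≤ p → q = 0 ∨ q = p := by
      intro q hq0 hqp
      by_contra hc
      push_neg at hc
      obtain ⟨hq ,hqp'⟩ := hc
      have h1 : μ ≤ F q := csInf_le hSSbdd ⟨q, ⟨hq0, hq⟩, rfl⟩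
      have hpq0 : 0 ≤ p - q := sub0' hadd hqp
      have hpqne : p - q ≠ 0 := by
        intro h
        apply hqp'
        have := sub_eq_zero.mp h
        exact this.symm
      have h2 : μ ≤ F (p - q) := csInf_le hSSbdd ⟨p - q, ⟨hpq0, hpqne⟩, rfl⟩
      have h3 : F p = F q + F (p - q) := by
        rw [← hFadd]
        congr 1
        abel
      linarith
    -- every positive element is a natural multiple of p
    have hmul : ∀ n : ℕ, ∀ g : G, 0 ≤ g → g ≤ n • p → ∃ m : ℕ, g = m • p := by
      intro n
      induction n with
      | zero =>
          intro g hg0 hgle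
          rw [zero_nsmul] at hgle
          exact ⟨0, by rw [zero_nsmul]; exact le_antisymm hgle hg0⟩
      | succ n ih =>
          intro g hg0 hgle
          rw [succ_nsmul] at hgle
          obtain ⟨g₁, g₂, hg12, hg₁0, hg₁, hg₂0, hg₂⟩ :=
            riesz_decomp' hadd hRiesz hg0 hgle (nsmul_nn' hadd hp0 n) hp0
          obtain ⟨m, hm⟩ := ih g₁ hg₁0 hg₁
          rcases hatom g₂ hg₂0 hg₂ with h | h
          · exact ⟨m, by rw [hg12, hm, h, add_zero]⟩
          · exact ⟨m + 1, by rw [hg12, hm, h, succ_nsmul]⟩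
    have hpos_mul : ∀ g : G, 0 ≤ g → ∃ m : ℕ, g = m • p := by
      intro g hg
      obtain ⟨n, hn⟩ := exists_le_nsmul' hadd hsimple hp0 hpne g
      exact hmul n g hg hn
    have hτp : 0 < τ i₀ p := hfaith p hp0 hpne i₀
    have hinj : ∀ m n : ℤ, m • p = n • p → m = n := by
      intro m n hmn
      have h1 : τ i₀ (m • p) = τ i₀ (n • p) := by rw [hmn]
      rw [fzsmul' (hτadd i₀), fzsmul' (hτadd i₀)] at h1
      have := mul_right_cancel₀ (ne_of_gt hτp) h1
      exact_mod_cast this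
    set φ : ℤ →+ G :=
      { toFun := fun n => n • p
        map_zero' := zero_zsmul p
        map_add' := fun m n => add_zsmul p m n } with hφ
    have hφapp : ∀ n : ℤ, φ n = n • p := fun n => rfl
    have hφbij : Function.Bijective φ := by
      constructor
      · intro m n h
        exact hinj m n h
      · intro g
        obtain ⟨y, hy1, hy2⟩ := hdir g 0
        obtain ⟨m₁, hm₁⟩ := hpos_mul y hy2
        obtain ⟨m₂, hm₂⟩ := hpos_mul (y - g) (by
          have : g ≤ y := hy1
          exact sub0' hadd this)
        refine ⟨(m₁ : ℤ) - (m₂ : ℤ), ?_⟩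
        rw [hφapp, sub_zsmul, natCast_zsmul, natCast_zsmul, ← hm₁, ← hm₂]
        abel
    set e : G ≃+ ℤ := (AddEquiv.ofBijective φ hφbij).symm with he
    refine ⟨e, fun g => ?_⟩
    have hge : φ (e g) = g := (AddEquiv.ofBijective φ hφbij).apply_symm_apply g
    constructor
    · intro hg
      obtain ⟨m, hm⟩ := hpos_mul g hg
      have h1 : e g = (m : ℤ) := by
        apply hφbij.1
        rw [hge, hφapp, natCast_zsmul]
        exact hm
      rw [h1]
      exact Int.natCast_nonneg m
    · intro hg
      obtain ⟨n', hn'⟩ := Int.eq_ofNat_of_zero_le hg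
      have h2 : g = n' • p := by
        rw [← natCast_zsmul, ← hn']
        exact hge.symm
      rw [h2]
      exact nsmul_nn' hadd hp0 _
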